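/- Let (Ω, μ) be a finite measure space, let u, w : Ω → [0,∞) be integrable, and let ψ : Ω → ℝ be bounded and measurable. Then the function ε ↦ ∫_Ω ( e^{εψ/2} √u − √w )² dμ is differentiable at ε = 0 with derivative ∫_Ω √u (√u − √w) ψ dμ. -/

import Mathlib

open Real MeasureTheory

/-- differentiability at `ε = 0` of
`ε ↦ ∫ (e^{εψ/2}√u − √w)² dμ`, with derivative `∫ √u(√u − √w)ψ dμ`. -/
theorem stmt7 {X : Type*} [MeasurableSpace X] (μ : Measure X) [IsFiniteMeasure μ]
    (u w ψ : X → ℝ) (hu0 : ∀ x, 0 ≤ u x) (hw0 : ∀ x, 0 ≤ w x)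
    (huI : Integrable u μ) (hwI : Integrable w μ)
    (hψm : Measurable ψ) (hψb : ∃ B : ℝ, ∀ x, |ψ x| ≤ B) :
    HasDerivAt
      (fun ε : ℝ =>
        ∫ x, (Real.exp (ε * ψ x / 2) * Real.sqrt (u x) - Real.sqrt (w x)) ^ 2 ∂μ)
      (∫ x, Real.sqrt (u x) * (Real.sqrt (u x) - Real.sqrt (w x)) * ψ x ∂μ) 0 := by
  obtain ⟨B₀, hB₀⟩ := hψb
  set B := max B₀ 0 with hBdef
  have hB : ∀ x, |ψ x| ≤ B := fun x => (hB₀ x).trans (le_max_left _ _)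
  have hB0 : 0 ≤ B := le_max_right _ _
  set F : ℝ → X → ℝ := fun ε x =>
    (Real.exp (ε * ψ x / 2) * Real.sqrt (u x) - Real.sqrt (w x)) ^ 2 with hF
  set F' : ℝ → X → ℝ := fun ε x =>
    (Real.exp (ε * ψ x / 2) * Real.sqrt (u x) - Real.sqrt (w x)) *
      (Real.exp (ε * ψ x / 2) * Real.sqrt (u x)) * ψ x with hF'
  have hum : AEStronglyMeasurable u μ := huI.aestronglyMeasurable
  have hwm : AEStronglyMeasurable w μ := hwI.aestronglyMeasurable
  have hsu : AEStronglyMeasurable (fun x => Real.sqrt (u x)) μ :=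
    (Real.continuous_sqrt.comp_aestronglyMeasurable hum)
  have hsw : AEStronglyMeasurable (fun x => Real.sqrt (w x)) μ :=
    (Real.continuous_sqrt.comp_aestronglyMeasurable hwm)
  -- integrability of √u √w
  have huwI : Integrable (fun x => Real.sqrt (u x) * Real.sqrt (w x)) μ := by
    refine ((huI.add hwI).div_const 2).mono (hsu.mul hsw) ?_
    filter_upwards with x
    have h1 : 0 ≤ Real.sqrt (u x) * Real.sqrt (w x) :=
      mul_nonneg (Real.sqrt_nonneg _) (Real.sqrt_nonneg _)
    rw [Real.norm_eq_abs, Real.norm_eq_abs, abs_of_nonneg h1]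
    have hgm : Real.sqrt (u x) * Real.sqrt (w x) ≤ (u x + w x) / 2 := by
      nlinarith [Real.sq_sqrt (hu0 x), Real.sq_sqrt (hw0 x),
        sq_nonneg (Real.sqrt (u x) - Real.sqrt (w x)), Real.sqrt_nonneg (u x),
        Real.sqrt_nonneg (w x)]
    calc Real.sqrt (u x) * Real.sqrt (w x) ≤ (u x + w x) / 2 := hgm
      _ ≤ |(u x + w x) / 2| := le_abs_self _
  set bound : X → ℝ := fun x =>
    (Real.exp (B / 2) * Real.sqrt (u x) + Real.sqrt (w x)) *
      (Real.exp (B / 2) * Real.sqrt (u x)) * B with hbound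
  have hboundI : Integrable bound μ := by
    have h1 : Integrable (fun x => Real.exp (B/2) * Real.exp (B/2) * u x * B
        + Real.exp (B/2) * (Real.sqrt (u x) * Real.sqrt (w x)) * B) μ := by
      refine Integrable.add ?_ ?_
      · exact ((huI.const_mul _).mul_const _)
      · exact ((huwI.const_mul _).mul_const _)
    refine h1.congr (Filter.Eventually.of_forall fun x => ?_)
    simp only [hbound]
    have hs : Real.sqrt (u x) * Real.sqrt (u x) = u x := Real.mul_self_sqrt (hu0 x)
    linear_combination (-(Real.exp (B/2) * Real.exp (B/2) * B)) * hs
  have key := hasDerivAt_integral_of_dominated_loc_of_deriv_le (μ := μ) (F := F) (F' := F')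
    (x₀ := (0:ℝ)) (bound := bound) (s := Metric.ball (0:ℝ) 1) (Metric.ball_mem_nhds _ one_pos)
    (Filter.Eventually.of_forall fun t => by
      apply AEStronglyMeasurable.pow
      exact ((Real.continuous_exp.comp_aestronglyMeasurable
        (((hψm.const_mul t).div_const 2).aestronglyMeasurable)).mul hsu).sub hsw)
    (by
      -- Integrable (F 0)
      have hFeq : F 0 = fun x => (Real.sqrt (u x) - Real.sqrt (w x))^2 := by
        funext x; simp [hF]
      rw [hFeq]
      have : Integrable (fun x => u x - 2 * (Real.sqrt (u x) * Real.sqrt (w x)) + w x) μ :=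
        (huI.sub (huwI.const_mul 2)).add hwI
      refine this.congr (Filter.Eventually.of_forall fun x => ?_)
      have hsuu : Real.sqrt (u x) * Real.sqrt (u x) = u x := Real.mul_self_sqrt (hu0 x)
      have hsww : Real.sqrt (w x) * Real.sqrt (w x) = w x := Real.mul_self_sqrt (hw0 x)
      linear_combination -hsuu - hsww)
    (by
      apply AEStronglyMeasurable.mul
      apply AEStronglyMeasurable.mul
      · exact ((Real.continuous_exp.comp_aestronglyMeasurable
          (((hψm.const_mul 0).div_const 2).aestronglyMeasurable)).mul hsu).sub hsw
      · exact (Real.continuous_exp.comp_aestronglyMeasurable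
          (((hψm.const_mul 0).div_const 2).aestronglyMeasurable)).mul hsu
      · exact hψm.aestronglyMeasurable)
    (by
      filter_upwards with x t ht
      simp only [Metric.mem_ball, Real.dist_eq, sub_zero] at ht
      have he : Real.exp (t * ψ x / 2) ≤ Real.exp (B / 2) := by
        apply Real.exp_le_exp.2
        have : |t * ψ x| ≤ B := by
          rw [abs_mul]
          calc |t| * |ψ x| ≤ 1 * B := by
                apply mul_le_mul (le_of_lt ht) (hB x) (abs_nonneg _) zero_le_one
            _ = B := one_mul B
        linarith [neg_abs_le (t * ψ x), le_abs_self (t * ψ x)]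
      have hep : 0 < Real.exp (t * ψ x / 2) := Real.exp_pos _
      have hsu0 := Real.sqrt_nonneg (u x)
      have hsw0 := Real.sqrt_nonneg (w x)
      simp only [hF', hbound, Real.norm_eq_abs]
      rw [abs_mul, abs_mul]
      have h1 : |Real.exp (t * ψ x / 2) * Real.sqrt (u x) - Real.sqrt (w x)| ≤
          Real.exp (B/2) * Real.sqrt (u x) + Real.sqrt (w x) := by
        rw [abs_sub_comm]
        refine (abs_sub _ _).trans ?_
        rw [abs_of_nonneg hsw0, abs_of_nonneg (mul_nonneg hep.le hsu0)]
        have : Real.exp (t * ψ x / 2) * Real.sqrt (u x) ≤ Real.exp (B/2) * Real.sqrt (u x) :=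
          mul_le_mul_of_nonneg_right he hsu0
        linarith
      have h2 : |Real.exp (t * ψ x / 2) * Real.sqrt (u x)| ≤
          Real.exp (B/2) * Real.sqrt (u x) := by
        rw [abs_of_nonneg (mul_nonneg hep.le hsu0)]
        exact mul_le_mul_of_nonneg_right he hsu0
      have h3 : |ψ x| ≤ B := hB x
      have hbn : 0 ≤ Real.exp (B/2) * Real.sqrt (u x) + Real.sqrt (w x) := by positivity
      have hbn2 : 0 ≤ Real.exp (B/2) * Real.sqrt (u x) := by positivity
      exact mul_le_mul (mul_le_mul h1 h2 (abs_nonneg _) hbn) h3 (abs_nonneg _)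
        (mul_nonneg hbn hbn2))
    hboundI
    (by
      filter_upwards with x t ht
      have hd : HasDerivAt (fun s : ℝ => Real.exp (s * ψ x / 2))
          (Real.exp (t * ψ x / 2) * (ψ x / 2)) t := by
        have := ((hasDerivAt_id t).mul_const (ψ x / 2)).exp
        simpa [mul_div_assoc] using this
      have := (((hd.mul_const (Real.sqrt (u x))).sub_const (Real.sqrt (w x))).fun_pow 2)
      refine this.congr_deriv ?_
      simp only [hF']
      ring)
  have h2 := key.2
  refine h2.congr_deriv ?_
  apply integral_congr_ae
  filter_upwards with x
  simp only [hF', zero_mul, zero_div, Real.exp_zero, one_mul]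
  ring
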